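/- The uniform morphism φ on {1,2,3} with φ(1)=1221, φ(2)=2332, φ(3)=3113 is cubefree: the image of every cubefree word is cubefree. -/

import Mathlib

/-- A square: a word of the form `x ++ x` with `x` nonempty. -/
def IsSq {α : Type*} (w : List α) : Prop := ∃ x : List α, x ≠ [] ∧ w = x ++ x

/-- A cube: a word of the form `x ++ x ++ x` with `x` nonempty. -/
def IsCube {α : Type*} (w : List α) : Prop := ∃ x : List α, x ≠ [] ∧ w = x ++ x ++ x

/-- A weak square: a word of the form `a ++ x ++ x ++ a` with `a` a letter. -/
def IsWeakSq {α : Type*} (w : List α) : Prop :=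
  ∃ (a : α) (x : List α), w = a :: (x ++ x ++ [a])

/-- An overlap: a word of the form `a ++ x ++ a ++ x ++ a`. -/
def IsOverlap {α : Type*} (w : List α) : Prop :=
  ∃ (a : α) (x : List α), w = a :: (x ++ a :: x ++ [a])

def SqFree {α : Type*} (w : List α) : Prop := ∀ v, v <:+: w → ¬ IsSq v
def CubeFree {α : Type*} (w : List α) : Prop := ∀ v, v <:+: w → ¬ IsCube v
def WeakSqFree {α : Type*} (w : List α) : Prop := ∀ v, v <:+: w → ¬ IsWeakSq v
def OverlapFree {α : Type*} (w : List α) : Prop := ∀ v, v <:+: w → ¬ IsOverlap v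

/-- Applying the morphism determined by letter images `φ` to a finite word. -/
def applyM {α : Type*} (φ : α → List α) (w : List α) : List α := (w.map φ).flatten

def phi : Fin 3 → List (Fin 3) := ![[0,1,1,0], [1,2,2,1], [2,0,0,2]]

lemma phi_eq (a : Fin 3) : phi a = [a, a+1, a+1, a] := by fin_cases a <;> rfl

lemma applyM_cons (a : Fin 3) (l : List (Fin 3)) :
    applyM phi (a :: l) = phi a ++ applyM phi l := by simp [applyM]

lemma applyM_length (l : List (Fin 3)) : (applyM phi l).length = 4 * l.length := by
  induction l with
  | nil => rfl
  | cons a l ih => rw [applyM_cons]; simp [ih, phi_eq]; ring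

lemma applyM_getElem (l : List (Fin 3)) (n : ℕ) (h : n < 4 * l.length) :
    (applyM phi l)[n]'(by rw [applyM_length]; exact h) =
      l[n/4]'(by omega) + (if n % 4 = 1 ∨ n % 4 = 2 then 1 else 0) := by
  induction l generalizing n with
  | nil => simp at h
  | cons a l ih =>
    simp only [applyM_cons]
    by_cases hn : n < 4
    · rw [List.getElem_append_left (by simp [phi_eq]; omega)]
      interval_cases n <;> simp [phi_eq]
    · rw [List.getElem_append_right (by simp [phi_eq]; omega)]
      have h4 : (phi a).length = 4 := by simp [phi_eq]
      have h' : n - 4 < 4 * l.length := by simp at h; omega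
      have := ih (n - 4) h'
      simp only [h4]
      rw [this]
      obtain ⟨k, hk⟩ : ∃ k, n / 4 = k + 1 := ⟨n/4 - 1, by omega⟩
      simp only [hk, List.getElem_cons_succ, show (n-4)/4 = k from by omega,
        show (n-4)%4 = n%4 from by omega]

lemma sync (l : List (Fin 3)) (n : ℕ) (c : Fin 3) (h : n + 3 ≤ 4 * l.length)
    (h0 : (applyM phi l)[n]'(by rw [applyM_length]; omega) = c)
    (h1 : (applyM phi l)[n+1]'(by rw [applyM_length]; omega) = c+1)
    (h2 : (applyM phi l)[n+2]'(by rw [applyM_length]; omega) = c+1) : n % 4 = 0 := by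
  rw [applyM_getElem l n (by omega)] at h0
  rw [applyM_getElem l (n+1) (by omega)] at h1
  rw [applyM_getElem l (n+2) (by omega)] at h2
  have hr : n % 4 = 0 ∨ n % 4 = 1 ∨ n % 4 = 2 ∨ n % 4 = 3 := by omega
  rcases hr with hr | hr | hr | hr
  · exact hr
  · exfalso
    simp only [hr, show (n+1) % 4 = 2 from by omega, show (n+1)/4 = n/4 from by omega] at h0 h1
    norm_num at h0 h1
    exact (by decide : ∀ a c : Fin 3, a + 1 = c → a = c → False) _ _ h0 h1
  · exfalso
    simp only [hr, show (n+1) % 4 = 3 from by omega, show (n+1)/4 = n/4 from by omega] at h0 h1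
    norm_num at h0 h1
    exact (by decide : ∀ a c : Fin 3, a + 1 = c → a = c + 1 → False) _ _ h0 h1
  · exfalso
    simp only [show (n+1) % 4 = 0 from by omega, show (n+2) % 4 = 1 from by omega,
      show (n+1)/4 = n/4 + 1 from by omega, show (n+2)/4 = n/4 + 1 from by omega] at h1 h2
    norm_num at h1 h2
    exact (by decide : ∀ a c : Fin 3, a = c + 1 → a = c → False) _ _ h1 h2

lemma cube_shift {α : Type*} (x : List α) (j : ℕ) (hj : j < 2 * x.length)
    (ha : j < (x++x++x).length) (hb : j + x.length < (x++x++x).length) :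
    (x++x++x)[j]'ha = (x++x++x)[j + x.length]'hb := by
  have h2 : (x++x++x).drop x.length = x ++ x := by
    rw [List.drop_append]
    simp
  rw [List.getElem_append_left (show j < (x++x).length from by simp; omega)]
  simp only [show j + x.length = x.length + j from by omega]
  rw [List.getElem_drop' (by omega : x.length + j < (x++x++x).length)]
  simp only [h2]

lemma getElem_of_infix {α : Type*} {u s v t : List α} (hu : u = s ++ v ++ t)
    (j : ℕ) (hj : j < v.length) (h : s.length + j < u.length) :
    u[s.length + j]'h = v[j]'hj := by
  subst hu
  rw [List.getElem_drop' (by omega : s.length + j < (s ++ v ++ t).length)]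
  have : ((s ++ v ++ t).drop s.length) = v ++ t := by
    rw [List.append_assoc, List.drop_left]
  simp only [this]
  rw [List.getElem_append_left hj]

lemma period_of_cube {α : Type*} {u s x t : List α} (hu : u = s ++ (x ++ x ++ x) ++ t)
    (j : ℕ) (hj : j < 2 * x.length) (h1 : s.length + j < u.length)
    (h2 : s.length + j + x.length < u.length) :
    u[s.length + j]'h1 = u[s.length + j + x.length]'h2 := by
  have e1 := getElem_of_infix hu j (by simp; omega) h1
  have e2 := getElem_of_infix hu (j + x.length) (by simp; omega)
    (show s.length + (j + x.length) < u.length from by omega)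
  simp only [← Nat.add_assoc] at e2
  rw [e1, e2]
  exact cube_shift x j hj _ _

lemma infix_window {α : Type*} {u v s t : List α} (hu : u = s ++ v ++ t) (n m : ℕ)
    (hn : n ≤ s.length) (hm : s.length + v.length ≤ n + m) : v <:+: (u.drop n).take m := by
  subst hu
  rw [List.append_assoc, List.drop_append_of_le_length hn]
  rw [List.take_append, List.take_of_length_le (by simp; omega)]
  rw [List.take_append, List.take_of_length_le (by simp; omega)]
  exact ⟨s.drop n, _, by rw [List.append_assoc]⟩

lemma applyM_drop (l : List (Fin 3)) (n : ℕ) :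
    applyM phi (l.drop n) = (applyM phi l).drop (4*n) := by
  induction l generalizing n with
  | nil => simp [applyM]
  | cons a l ih =>
    cases n with
    | zero => simp
    | succ n =>
      rw [List.drop_succ_cons, ih, applyM_cons,
        show 4*(n+1) = (phi a).length + 4*n from by simp [phi_eq]; ring, List.drop_length_add_append]

lemma applyM_take (l : List (Fin 3)) (n : ℕ) :
    applyM phi (l.take n) = (applyM phi l).take (4*n) := by
  induction l generalizing n with
  | nil => simp [applyM]
  | cons a l ih =>
    cases n with
    | zero => simp [applyM]
    | succ n =>
      rw [List.take_succ_cons, applyM_cons, ih, applyM_cons,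
        show 4*(n+1) = (phi a).length + 4*n from by simp [phi_eq]; ring, List.take_length_add_append]

def eqRange (w : List (Fin 3)) (i p : ℕ) : Bool :=
  ((w.drop i).take p == (w.drop (i+p)).take p) && ((w.drop i).take p == (w.drop (i+2*p)).take p)

def hasCubeP (w : List (Fin 3)) (P : ℕ) : Bool :=
  (List.range (w.length+1)).any fun i =>
    (List.range (P+1)).any fun p => decide (1 ≤ p) && decide (i + 3*p ≤ w.length) && eqRange w i p

def hasCubeB (w : List (Fin 3)) : Bool := hasCubeP w w.length

lemma cube_of_hasCubeP {w : List (Fin 3)} {P : ℕ} (h : hasCubeP w P = true) :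
    ¬ CubeFree w := by
  simp only [hasCubeP, List.any_eq_true, List.mem_range, eqRange, Bool.and_eq_true,
    decide_eq_true_eq, beq_iff_eq] at h
  obtain ⟨i, hi, p, hp, ⟨hp1, hple⟩, he1, he2⟩ := h
  intro hcf
  apply hcf ((w.drop i).take (3*p))
  · exact ((List.take_prefix _ _).isInfix).trans ((List.drop_suffix _ _).isInfix)
  · refine ⟨(w.drop i).take p, ?_, ?_⟩
    · have : ((w.drop i).take p).length = p := by
        rw [List.length_take, List.length_drop]; omega
      intro hnil
      rw [hnil] at this; simp at this; omega
    · rw [show 3*p = p + (p + p) from by ring, List.take_add, List.take_add, List.drop_drop,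
        List.drop_drop]
      rw [show i + p + p = i + 2*p from by ring]
      rw [← he1, ← he2, List.append_assoc]

lemma hasCubeP_of_cube {w v x : List (Fin 3)} {P : ℕ} (hv : v <:+: w)
    (hx : x ≠ []) (hvx : v = x ++ x ++ x) (hP : x.length ≤ P) : hasCubeP w P = true := by
  obtain ⟨s, t, hst⟩ := hv
  simp only [hasCubeP, List.any_eq_true, List.mem_range, eqRange, Bool.and_eq_true,
    decide_eq_true_eq, beq_iff_eq]
  set p := x.length with hpdef
  have hp1 : 1 ≤ p := by
    rcases x with _ | ⟨a, x⟩
    · exact absurd rfl hx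
    · simp [hpdef]
  have hlen : s.length + 3*p + t.length = w.length := by
    have := congrArg List.length hst
    simp [hvx] at this
    omega
  have hd0 : w.drop s.length = x ++ (x ++ (x ++ t)) := by
    rw [← hst, hvx, List.append_assoc, List.append_assoc, List.append_assoc, List.drop_left]
  have hd1 : w.drop (s.length + p) = x ++ (x ++ t) := by
    rw [← List.drop_drop, hd0, List.drop_left' hpdef.symm]
  have hd2 : w.drop (s.length + 2*p) = x ++ t := by
    rw [show s.length + 2*p = s.length + p + p from by ring, ← List.drop_drop, hd1,
      List.drop_left' hpdef.symm]
  exact ⟨s.length, by omega, p, by omega, ⟨hp1, by omega⟩,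
    by rw [hd0, hd1, List.take_left' hpdef.symm, List.take_left' hpdef.symm],
    by rw [hd0, hd2, List.take_left' hpdef.symm, List.take_left' hpdef.symm]⟩

lemma period_of_cube' {α : Type*} {u s x t : List α} (hu : u = s ++ (x ++ x ++ x) ++ t) (n : ℕ)
    (hn1 : s.length ≤ n) (hn2 : n < s.length + 2*x.length)
    (h1 : n < u.length) (h2 : n + x.length < u.length) :
    u[n]'h1 = u[n + x.length]'h2 := by
  have := period_of_cube hu (n - s.length) (by omega)
      (show s.length + (n - s.length) < u.length from by omega)
      (show s.length + (n - s.length) + x.length < u.length from by omega)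
  simp only [show s.length + (n - s.length) = n from by omega] at this
  exact this

def en : ℕ → List (List (Fin 3))
  | 0 => [[]]
  | n+1 => (en n).flatMap fun w => [0 :: w, 1 :: w, 2 :: w]

def enLe (n : ℕ) : List (List (Fin 3)) := (List.range (n+1)).flatMap en

lemma mem_en (w : List (Fin 3)) : w ∈ en w.length := by
  induction w with
  | nil => simp [en]
  | cons a w ih =>
    simp only [List.length_cons, en, List.mem_flatMap]
    exact ⟨w, ih, by fin_cases a <;> simp⟩

lemma mem_enLe {w : List (Fin 3)} {n : ℕ} (h : w.length ≤ n) : w ∈ enLe n := by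
  simp only [enLe, List.mem_flatMap, List.mem_range]
  exact ⟨w.length, by omega, mem_en w⟩

set_option maxRecDepth 100000 in
set_option maxHeartbeats 4000000 in
lemma fincheck : (enLe 5).all (fun w => hasCubeB w || !(hasCubeP (applyM phi w) 5)) = true := by
  decide +kernel

theorem stmt5 : ∀ W : List (Fin 3), CubeFree W → CubeFree (applyM phi W) := by
  intro W hW v hv hcube
  obtain ⟨x, hx, rfl⟩ := hcube
  obtain ⟨s, t, hst⟩ := hv
  have hst' : applyM phi W = s ++ (x ++ x ++ x) ++ t := hst.symm
  have hp1 : 1 ≤ x.length := List.length_pos_iff.mpr hx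
  have hul : (applyM phi W).length = 4 * W.length := applyM_length W
  have hlen : s.length + 3*x.length + t.length = 4 * W.length := by
    have := congrArg List.length hst'
    simp only [List.length_append] at this
    omega
  rcases Nat.lt_or_ge x.length 6 with hsmall | hbig
  · -- small period: use finite check
    have hvin : (x ++ x ++ x) <:+: applyM phi ((W.drop (s.length/4)).take 5) := by
      rw [applyM_take, applyM_drop]
      exact infix_window hst' (4*(s.length/4)) (4*5) (by omega)
        (by simp only [List.length_append]; omega)
    have hcf' : CubeFree ((W.drop (s.length/4)).take 5) := fun v' hv' hc' =>
      hW v' (hv'.trans ((List.take_prefix _ _).isInfix.trans (List.drop_suffix _ _).isInfix)) hc'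
    have h1 : hasCubeB ((W.drop (s.length/4)).take 5) = false := by
      by_contra h
      rw [Bool.not_eq_false] at h
      exact cube_of_hasCubeP h hcf'
    have h2 := fincheck
    rw [List.all_eq_true] at h2
    have h3 := h2 ((W.drop (s.length/4)).take 5) (mem_enLe (by simp only [List.length_take, List.length_drop]; omega))
    rw [h1, hasCubeP_of_cube hvin hx rfl (by omega)] at h3
    simp at h3
  · -- big period: first show 4 ∣ x.length
    have Per : ∀ n, s.length ≤ n → n < s.length + 2*x.length →
        ∀ (h1 : n < (applyM phi W).length) (h2 : n + x.length < (applyM phi W).length),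
        (applyM phi W)[n]'h1 = (applyM phi W)[n + x.length]'h2 :=
      fun n a b c d => period_of_cube' hst' n a b c d
    have hq0a : s.length ≤ 4*((s.length+3)/4) := by omega
    have hq0b : 4*((s.length+3)/4) ≤ s.length+3 := by omega
    have hq0W : (s.length+3)/4 < W.length := by omega
    have w0 : ∀ k, k ≤ 2 → ∀ (h : 4*((s.length+3)/4) + k < (applyM phi W).length),
        (applyM phi W)[4*((s.length+3)/4) + k]'h
          = W[(s.length+3)/4]'hq0W + (if k = 1 ∨ k = 2 then 1 else 0) := by
      intro k hk h
      have := applyM_getElem W (4*((s.length+3)/4) + k) (by omega)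
      simp only [show (4*((s.length+3)/4) + k)/4 = (s.length+3)/4 from by omega,
        show (4*((s.length+3)/4) + k)%4 = k from by omega] at this
      exact this
    have hdvd : x.length % 4 = 0 := by
      have e0 : (applyM phi W)[4*((s.length+3)/4) + x.length]'(by omega)
          = W[(s.length+3)/4]'hq0W := by
        have A := Per (4*((s.length+3)/4)) (by omega) (by omega) (by omega) (by omega)
        rw [← A]
        have := w0 0 (by omega) (by omega)
        simpa using this
      have e1 : (applyM phi W)[4*((s.length+3)/4) + x.length + 1]'(by omega)
          = W[(s.length+3)/4]'hq0W + 1 := by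
        have A := Per (4*((s.length+3)/4) + 1) (by omega) (by omega) (by omega) (by omega)
        simp only [show 4*((s.length+3)/4) + x.length + 1 = 4*((s.length+3)/4) + 1 + x.length
          from by omega]
        rw [← A]
        have := w0 1 (by omega) (by omega)
        simpa using this
      have e2 : (applyM phi W)[4*((s.length+3)/4) + x.length + 2]'(by omega)
          = W[(s.length+3)/4]'hq0W + 1 := by
        have A := Per (4*((s.length+3)/4) + 2) (by omega) (by omega) (by omega) (by omega)
        simp only [show 4*((s.length+3)/4) + x.length + 2 = 4*((s.length+3)/4) + 2 + x.length
          from by omega]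
        rw [← A]
        have := w0 2 (by omega) (by omega)
        simpa using this
      have := sync W (4*((s.length+3)/4) + x.length) _ (by omega) e0 e1 e2
      omega
    -- desubstitute
    have hm4 : x.length = 4 * (x.length / 4) := by omega
    have hm1 : 1 ≤ x.length / 4 := by omega
    have h3m : (s.length+3)/4 + 3*(x.length/4) ≤ W.length := by omega
    have PW : ∀ j, j < 2*(x.length/4) → ∀ (hj' : (s.length+3)/4 + j < W.length)
        (hj : (s.length+3)/4 + j + x.length/4 < W.length),
        W[(s.length+3)/4 + j]'hj' = W[(s.length+3)/4 + j + x.length/4]'hj := by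
      intro j hj hj1 hj2
      have A := Per (4*((s.length+3)/4 + j)) (by omega) (by omega) (by omega) (by omega)
      have B := applyM_getElem W (4*((s.length+3)/4 + j)) (by omega)
      have C := applyM_getElem W (4*((s.length+3)/4 + j) + x.length) (by omega)
      simp only [show (4*((s.length+3)/4 + j))/4 = (s.length+3)/4 + j from by omega,
        show (4*((s.length+3)/4 + j))%4 = 0 from by omega] at B
      simp only [show (4*((s.length+3)/4 + j) + x.length)/4 = (s.length+3)/4 + j + x.length/4
          from by omega,
        show (4*((s.length+3)/4 + j) + x.length)%4 = 0 from by omega] at C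
      norm_num at B C
      rw [← B, ← C]
      exact A
    have hx'len : ((W.drop ((s.length+3)/4)).take (x.length/4)).length = x.length/4 := by
      simp only [List.length_take, List.length_drop]
      omega
    have e1 : (W.drop ((s.length+3)/4 + x.length/4)).take (x.length/4)
        = (W.drop ((s.length+3)/4)).take (x.length/4) := by
      apply List.ext_getElem (by simp only [List.length_take, List.length_drop]; omega)
      intro j h1 h2
      simp only [List.getElem_take, List.getElem_drop]
      have := PW j (by omega) (by omega) (by omega)
      simp only [show (s.length+3)/4 + j + x.length/4 = (s.length+3)/4 + x.length/4 + j
        from by omega] at this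
      exact this.symm
    have e2 : (W.drop ((s.length+3)/4 + x.length/4 + x.length/4)).take (x.length/4)
        = (W.drop ((s.length+3)/4)).take (x.length/4) := by
      apply List.ext_getElem (by simp only [List.length_take, List.length_drop]; omega)
      intro j h1 h2
      simp only [List.getElem_take, List.getElem_drop]
      have A := PW (j + x.length/4) (by omega) (by omega) (by omega)
      have B := PW j (by omega) (by omega) (by omega)
      simp only [show (s.length+3)/4 + (j + x.length/4) = (s.length+3)/4 + j + x.length/4
          from by omega,
        show (s.length+3)/4 + j + x.length/4 + x.length/4
          = (s.length+3)/4 + x.length/4 + x.length/4 + j from by omega] at A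
      exact (B.trans A).symm
    apply hW ((W.drop ((s.length+3)/4)).take (3*(x.length/4)))
    · exact (List.take_prefix _ _).isInfix.trans (List.drop_suffix _ _).isInfix
    · refine ⟨(W.drop ((s.length+3)/4)).take (x.length/4), ?_, ?_⟩
      · intro hnil
        rw [hnil] at hx'len
        simp at hx'len
        omega
      · rw [show 3*(x.length/4) = x.length/4 + (x.length/4 + x.length/4) from by ring,
          List.take_add, List.take_add, List.drop_drop, List.drop_drop, e1, e2,
          ← List.append_assoc]
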